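/- Let k ≥ 1 be an integer, N ≥ 4 an integer, and 0 < δ < 1/4. Let f be a real-valued function of class C^k on [N, 2N] such that there exist λ_k > 0 and c_k ≥ 1 with λ_k ≤ |f^{(k)}(x)| ≤ c_k·λ_k for all x ∈ [N, 2N]. Assume moreover (k+1)!·δ < λ_k. Then, with α_k = 2k·(2c_k)^{2/(k(k+1))}, we have R(f,N,δ) ≤ α_k·N·λ_k^{2/(k(k+1))} + 4k. -/

import Mathlib

open Set Polynomial Finset

private lemma contDiff_polyeval (n : ℕ∞) (P : ℝ[X]) : ContDiff ℝ n fun x : ℝ => P.eval x := by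
  induction P using Polynomial.induction_on' with
  | add p q hp hq => simpa [Polynomial.eval_add] using hp.add hq
  | monomial k a =>
      simpa [Polynomial.eval_monomial] using contDiff_const.mul (contDiff_id.pow k)

private lemma iteratedDerivWithin_polyeval {s : Set ℝ} (hs : UniqueDiffOn ℝ s) :
    ∀ (n : ℕ) (P : ℝ[X]) (x : ℝ), x ∈ s →
      iteratedDerivWithin n (fun y => P.eval y) s x = (Polynomial.derivative^[n] P).eval x := by
  intro n
  induction n with
  | zero => simp
  | succ n IH =>
    intro P x hx
    rw [iteratedDerivWithin_succ']
    have heq : Set.EqOn (derivWithin (fun y => P.eval y) s)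
        (fun y => (Polynomial.derivative P).eval y) s := fun y hy =>
      Polynomial.derivWithin P (hs.uniqueDiffWithinAt hy)
    calc iteratedDerivWithin n (derivWithin (fun y => P.eval y) s) s x
        = iteratedDerivWithin n (fun y => (Polynomial.derivative P).eval y) s x :=
          iteratedDerivWithin_congr heq hx
      _ = (Polynomial.derivative^[n] (Polynomial.derivative P)).eval x := IH _ x hx
      _ = (Polynomial.derivative^[n+1] P).eval x := by rw [Function.iterate_succ_apply]

private lemma iterate_derivative_top (P : ℝ[X]) (k : ℕ) (hP : P.natDegree ≤ k) :
    Polynomial.derivative^[k] P = Polynomial.C ((k.factorial : ℝ) * P.coeff k) := by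
  have h0 : (Polynomial.derivative^[k] P).natDegree ≤ 0 := by
    refine le_trans (Polynomial.natDegree_iterate_derivative P k) (by omega)
  have := Polynomial.eq_C_of_natDegree_le_zero h0
  rw [this, Polynomial.coeff_iterate_derivative]
  congr 1
  simp [Nat.descFactorial_self, mul_comm, Nat.factorial]

private lemma rolle_iterated {a b : ℝ} (hab : a < b) :
    ∀ (n : ℕ) (g : ℝ → ℝ), ContDiffOn ℝ n g (Set.Icc a b) →
    ∀ (t : Fin (n+1) → ℝ), StrictMono t → (∀ i, t i ∈ Set.Icc a b) →
    (∀ i, g (t i) = 0) →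
    ∃ ξ ∈ Set.Icc a b, iteratedDerivWithin n g (Set.Icc a b) ξ = 0 := by
  intro n
  induction n with
  | zero =>
    intro g _ t _ htm hz
    exact ⟨t 0, htm 0, by simpa using hz 0⟩
  | succ n IH =>
    intro g hg t ht htm hz
    have hder : ∀ i : Fin (n+1), ∃ ξ ∈ Set.Ioo (t i.castSucc) (t i.succ), deriv g ξ = 0 := by
      intro i
      refine exists_deriv_eq_zero (ht (Fin.castSucc_lt_succ (i := i))) ?_ (by rw [hz, hz])
      exact hg.continuousOn.mono (Set.Icc_subset_Icc (htm _).1 (htm _).2)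
    choose ξ hmem hval using hder
    have hξm : ∀ i, ξ i ∈ Set.Ioo a b := by
      intro i
      exact ⟨lt_of_le_of_lt (htm i.castSucc).1 (hmem i).1,
        lt_of_lt_of_le (hmem i).2 (htm i.succ).2⟩
    have hξmono : StrictMono ξ := by
      rw [Fin.strictMono_iff_lt_succ]
      intro i
      calc ξ i.castSucc < t i.castSucc.succ := (hmem i.castSucc).2
        _ = t i.succ.castSucc := by rw [Fin.succ_castSucc]
        _ < ξ i.succ := (hmem i.succ).1
    have hzero : ∀ i, derivWithin g (Set.Icc a b) (ξ i) = 0 := by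
      intro i
      rw [derivWithin_of_mem_nhds (Icc_mem_nhds (hξm i).1 (hξm i).2)]
      exact hval i
    have hg' : ContDiffOn ℝ n (derivWithin g (Set.Icc a b)) (Set.Icc a b) := by
      refine hg.derivWithin (uniqueDiffOn_Icc hab) ?_
      exact_mod_cast le_of_eq (by push_cast; ring)
    obtain ⟨c, hc, hc0⟩ := IH (derivWithin g (Set.Icc a b)) hg' ξ hξmono
      (fun i => Set.Ioo_subset_Icc_self (hξm i)) hzero
    refine ⟨c, hc, ?_⟩
    rw [iteratedDerivWithin_succ']
    exact hc0

private lemma coeff_interpolate_top (k : ℕ) (t : Fin (k+1) → ℝ)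
    (ht : Function.Injective t) (r : Fin (k+1) → ℝ) :
    (Lagrange.interpolate Finset.univ t r).coeff k
      = ∑ i, r i * ∏ j ∈ Finset.univ.erase i, (t i - t j)⁻¹ := by
  rw [Lagrange.interpolate_apply, Polynomial.finset_sum_coeff]
  refine Finset.sum_congr rfl (fun i _ => ?_)
  rw [Polynomial.coeff_C_mul]
  congr 1
  have hdeg : (Lagrange.basis Finset.univ t i).natDegree = k := by
    rw [Lagrange.natDegree_basis (ht.injOn) (Finset.mem_univ i)]
    simp
  have : (Lagrange.basis Finset.univ t i).coeff k
      = (Lagrange.basis Finset.univ t i).leadingCoeff := by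
    rw [Polynomial.leadingCoeff, hdeg]
  rw [this, Lagrange.basis, Polynomial.leadingCoeff_prod]
  refine Finset.prod_congr rfl (fun j hj => ?_)
  have hne : t i ≠ t j := fun h => (Finset.mem_erase.1 hj).1 (ht h).symm
  rw [Lagrange.basisDivisor, Polynomial.leadingCoeff_mul, Polynomial.leadingCoeff_C,
    (Polynomial.monic_X_sub_C (t j)).leadingCoeff, mul_one]


private lemma qprod_dvd (k : ℕ) (n : Fin (k+1) → ℤ) (hn : StrictMono n) (i : Fin (k+1)) :
    (∏ j ∈ Finset.univ.erase i, (n i - n j)) ∣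
      ∏ p ∈ Finset.univ.filter (fun p : Fin (k+1) × Fin (k+1) => p.1 < p.2),
        (n p.2 - n p.1) := by
  have habs : (∏ j ∈ Finset.univ.erase i, (n i - n j)) ∣
      ∏ j ∈ Finset.univ.erase i, |n i - n j| := by
    rw [← Finset.abs_prod]
    exact (self_dvd_abs _)
  refine habs.trans ?_
  have heq : (∏ j ∈ Finset.univ.erase i, |n i - n j|) =
      ∏ p ∈ (Finset.univ.filter
        (fun p : Fin (k+1) × Fin (k+1) => p.1 < p.2 ∧ (p.1 = i ∨ p.2 = i))),
        (n p.2 - n p.1) := by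
    refine Finset.prod_bij' (fun j _ => if j < i then ((j, i) : Fin (k+1) × Fin (k+1)) else (i, j))
      (fun p _ => if p.1 = i then p.2 else p.1) ?_ ?_ ?_ ?_ ?_
    · intro j hj
      have hji : j ≠ i := (Finset.mem_erase.1 hj).1
      by_cases h : j < i
      · simp [h, Finset.mem_filter]
      · have : i < j := lt_of_le_of_ne (not_lt.1 h) (Ne.symm hji)
        simp [h, Finset.mem_filter, this]
    · intro p hp
      obtain ⟨-, hlt, hcase⟩ := Finset.mem_filter.1 hp
      rcases hcase with h1 | h2
      · have : p.2 ≠ i := by rw [← h1]; exact (ne_of_gt hlt)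
        simp [h1, Finset.mem_erase, this]
      · have : p.1 ≠ i := by rw [← h2]; exact (ne_of_lt hlt)
        simp [this, h2, Finset.mem_erase]
    · intro j hj
      have hji : j ≠ i := (Finset.mem_erase.1 hj).1
      by_cases h : j < i
      · simp [h, ne_of_lt h]
      · simp [h, hji]
    · intro p hp
      obtain ⟨-, hlt, hcase⟩ := Finset.mem_filter.1 hp
      rcases hcase with h1 | h2
      · have h2i : ¬ (p.2 < i) := by rw [← h1]; exact not_lt.2 (le_of_lt hlt)
        simp [h1, h2i]
        exact Prod.ext h1.symm rfl
      · have h1i : p.1 ≠ i := by rw [← h2]; exact (ne_of_lt hlt)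
        have : p.1 < i := h2 ▸ hlt
        simp [h1i, this]
        exact Prod.ext rfl h2.symm
    · intro j hj
      have hji : j ≠ i := (Finset.mem_erase.1 hj).1
      by_cases h : j < i
      · simp only [h, if_true]
        rw [abs_of_pos]
        exact sub_pos.2 (hn h)
      · have : i < j := lt_of_le_of_ne (not_lt.1 h) (Ne.symm hji)
        simp only [h, if_false]
        rw [abs_of_neg (sub_neg.2 (hn this))]
        ring
  rw [heq]
  refine Finset.prod_dvd_prod_of_subset _ _ _ ?_
  intro p hp
  simp only [Finset.mem_filter] at hp ⊢
  exact ⟨hp.1, hp.2.1⟩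

private lemma pairs_card (m : ℕ) :
    2 * (Finset.univ.filter (fun p : Fin m × Fin m => p.1 < p.2)).card = m * (m - 1) := by
  have hswap : (Finset.univ.filter (fun p : Fin m × Fin m => p.2 < p.1)).card
      = (Finset.univ.filter (fun p : Fin m × Fin m => p.1 < p.2)).card := by
    refine Finset.card_bij' (fun p _ => Prod.swap p) (fun p _ => Prod.swap p) ?_ ?_ ?_ ?_ <;>
      simp [Finset.mem_filter]
  have hunion : (Finset.univ.filter (fun p : Fin m × Fin m => p.1 < p.2)) ∪
      (Finset.univ.filter (fun p : Fin m × Fin m => p.2 < p.1))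
      = (Finset.univ : Finset (Fin m)).offDiag := by
    ext p
    simp only [Finset.mem_union, Finset.mem_filter, Finset.mem_offDiag, Finset.mem_univ,
      true_and]
    exact lt_or_lt_iff_ne
  have hdisj : Disjoint (Finset.univ.filter (fun p : Fin m × Fin m => p.1 < p.2))
      (Finset.univ.filter (fun p : Fin m × Fin m => p.2 < p.1)) := by
    rw [Finset.disjoint_filter]
    intro p _ h1 h2
    exact absurd h2 (not_lt.2 (le_of_lt h1))
  have hcard := Finset.card_union_of_disjoint hdisj
  rw [hunion] at hcard
  rw [Finset.offDiag_card, Finset.card_univ, Fintype.card_fin] at hcard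
  rcases m with _ | m
  · simpa using hcard.symm
  · have hmm : (m+1) * (m+1) - (m+1) = (m+1) * m := by
      have : (m+1) * (m+1) = (m+1) * m + (m+1) := by ring
      rw [this, Nat.add_sub_cancel]
    rw [hmm, hswap] at hcard
    simp only [Nat.add_sub_cancel]
    linarith [hcard]

private lemma divdiff_mvt {a b : ℝ} (hab : a < b) (k : ℕ) (f : ℝ → ℝ)
    (hf : ContDiffOn ℝ k f (Set.Icc a b)) (t : Fin (k+1) → ℝ)
    (ht : StrictMono t) (htm : ∀ i, t i ∈ Set.Icc a b) :
    ∃ ξ ∈ Set.Icc a b,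
      ∑ i, f (t i) * ∏ j ∈ Finset.univ.erase i, (t i - t j)⁻¹
        = iteratedDerivWithin k f (Set.Icc a b) ξ / (k.factorial : ℝ) := by
  set P : ℝ[X] := Lagrange.interpolate Finset.univ t (fun i => f (t i)) with hP
  have hudo := uniqueDiffOn_Icc hab
  have hPdeg : P.natDegree ≤ k := by
    have h1 := Lagrange.degree_interpolate_lt (s := Finset.univ) (v := t)
      (r := fun i => f (t i)) ht.injective.injOn
    rw [Finset.card_univ, Fintype.card_fin] at h1
    rcases eq_or_ne P 0 with h0 | h0
    · simp [h0]
    · have := (Polynomial.natDegree_lt_iff_degree_lt (n := k+1) h0).2 (by exact_mod_cast h1)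
      omega
  -- g := f - eval P has k+1 zeros
  have hzero : ∀ i, (f - fun x => P.eval x) (t i) = 0 := by
    intro i
    have := Lagrange.eval_interpolate_at_node (r := fun i => f (t i))
      ht.injective.injOn (Finset.mem_univ i)
    simp only [Pi.sub_apply]
    rw [← hP] at this
    rw [this]
    ring
  have hg : ContDiffOn ℝ k (f - fun x => P.eval x) (Set.Icc a b) :=
    hf.sub ((contDiff_polyeval k P).contDiffOn)
  obtain ⟨ξ, hξ, hξ0⟩ := rolle_iterated hab k (f - fun x => P.eval x) hg t ht htm hzero
  refine ⟨ξ, hξ, ?_⟩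
  have hudo' := uniqueDiffOn_Icc hab
  have hsub := iteratedDerivWithin_sub hξ hudo' (hf ξ hξ) ((contDiff_polyeval k P).contDiffOn ξ hξ)
  rw [hsub] at hξ0
  have hpoly : iteratedDerivWithin k (fun y => P.eval y) (Set.Icc a b) ξ
      = (k.factorial : ℝ) * P.coeff k := by
    rw [iteratedDerivWithin_polyeval hudo' k P ξ hξ, iterate_derivative_top P k hPdeg]
    simp
  have hco := coeff_interpolate_top k t ht.injective (fun i => f (t i))
  rw [← hP] at hco
  have hfac : (k.factorial : ℝ) ≠ 0 := by positivity
  rw [hpoly] at hξ0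
  rw [← hco]
  field_simp
  linarith [hξ0]

private lemma spacing_key (k : ℕ) (a b : ℝ) (hab : a < b)
    (δ lam c : ℝ) (hδ0 : 0 < δ) (hlam : 0 < lam) (hc : 1 ≤ c)
    (f : ℝ → ℝ) (hf : ContDiffOn ℝ k f (Set.Icc a b))
    (hder : ∀ x ∈ Set.Icc a b,
      lam ≤ |iteratedDerivWithin k f (Set.Icc a b) x| ∧
      |iteratedDerivWithin k f (Set.Icc a b) x| ≤ c * lam)
    (hsmall : ((k+1).factorial : ℝ) * δ < lam)
    (n : Fin (k+1) → ℤ) (hn : StrictMono n)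
    (hmem : ∀ i, (a ≤ ((n i : ℤ) : ℝ) ∧ ((n i : ℤ) : ℝ) ≤ b) ∧
      |f ((n i : ℤ) : ℝ) - round (f ((n i : ℤ) : ℝ))| < δ) :
    (2*c*lam)⁻¹ ≤ (((n (Fin.last k) - n 0 : ℤ) : ℝ)) ^ (k*(k+1)/2 : ℕ) := by
  classical
  set t : Fin (k+1) → ℝ := fun i => ((n i : ℤ) : ℝ) with htdef
  have ht : StrictMono t := fun i j h => Int.cast_lt.2 (hn h)
  have htm : ∀ i, t i ∈ Set.Icc a b := fun i => ⟨(hmem i).1.1, (hmem i).1.2⟩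
  obtain ⟨ξ, hξ, hD⟩ := divdiff_mvt hab k f hf t ht htm
  set w : Fin (k+1) → ℝ := fun i => ∏ j ∈ Finset.univ.erase i, (t i - t j)⁻¹ with hwdef
  set D : ℝ := ∑ i, f (t i) * w i with hDdef
  have kfacpos : (0:ℝ) < (k.factorial : ℝ) := by positivity
  have hDlow : lam / (k.factorial : ℝ) ≤ |D| := by
    rw [hD, abs_div, abs_of_pos kfacpos]
    gcongr
    exact (hder ξ hξ).1
  have hDhigh : |D| ≤ c * lam / (k.factorial : ℝ) := by
    rw [hD, abs_div, abs_of_pos kfacpos]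
    gcongr
    exact (hder ξ hξ).2
  set q : Fin (k+1) → ℤ := fun i => ∏ j ∈ Finset.univ.erase i, (n i - n j) with hqdef
  have hq0 : ∀ i, q i ≠ 0 := by
    intro i
    refine Finset.prod_ne_zero_iff.2 (fun j hj => ?_)
    have : n i ≠ n j := fun h => (Finset.mem_erase.1 hj).1 (hn.injective h).symm
    exact sub_ne_zero.2 this
  have hw : ∀ i, w i = ((q i : ℤ) : ℝ)⁻¹ := by
    intro i
    rw [hwdef, hqdef]
    push_cast
    rw [← Finset.prod_inv_distrib]
  have hwabs : ∀ i, |w i| ≤ 1 := by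
    intro i
    rw [hw i, abs_inv]
    have h1 : (1:ℝ) ≤ |((q i : ℤ) : ℝ)| := by
      have := Int.one_le_abs (hq0 i)
      exact_mod_cast (by exact_mod_cast this : (1:ℤ) ≤ |q i|)
    rw [inv_le_one_iff₀]
    right
    exact h1
  set m : Fin (k+1) → ℤ := fun i => round (f (t i)) with hmdef
  have hε : ∀ i, |f (t i) - (m i : ℝ)| < δ := fun i => (hmem i).2
  set Dm : ℝ := ∑ i, (m i : ℝ) * w i with hDmdef
  set De : ℝ := ∑ i, (f (t i) - (m i : ℝ)) * w i with hDedef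
  have hsplit : D = Dm + De := by
    rw [hDdef, hDmdef, hDedef, ← Finset.sum_add_distrib]
    refine Finset.sum_congr rfl (fun i _ => ?_)
    ring
  have hDe : |De| ≤ ((k:ℝ)+1) * δ := by
    rw [hDedef]
    refine (Finset.abs_sum_le_sum_abs _ _).trans ?_
    have : ∀ i ∈ (Finset.univ : Finset (Fin (k+1))),
        |(f (t i) - (m i : ℝ)) * w i| ≤ δ := by
      intro i _
      rw [abs_mul]
      calc |f (t i) - (m i:ℝ)| * |w i| ≤ δ * 1 :=
        mul_le_mul (hε i).le (hwabs i) (abs_nonneg _) hδ0.le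
      _ = δ := mul_one δ
    refine (Finset.sum_le_sum this).trans ?_
    simp [mul_comm]
  have hkd : ((k:ℝ)+1) * δ < lam / (k.factorial : ℝ) := by
    rw [lt_div_iff₀ kfacpos]
    have : (((k+1).factorial : ℕ) : ℝ) = ((k:ℝ)+1) * (k.factorial : ℝ) := by
      rw [Nat.factorial_succ]; push_cast; ring
    calc ((k:ℝ)+1) * δ * (k.factorial:ℝ) = (((k+1).factorial : ℕ):ℝ) * δ := by
          rw [this]; ring
    _ < lam := hsmall
  have hDmlow : 0 < |Dm| := by
    have h1 : |Dm| ≥ |D| - |De| := by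
      have := abs_sub_abs_le_abs_sub D De
      have h2 : D - De = Dm := by rw [hsplit]; ring
      rw [h2] at this
      linarith
    linarith [hDlow, hDe, hkd]
  have hDmhigh : |Dm| ≤ 2 * c * lam := by
    have h1 : |Dm| ≤ |D| + |De| := by
      have h2 : Dm = D - De := by rw [hsplit]; ring
      rw [h2]
      exact abs_sub _ _
    have h3 : c * lam / (k.factorial:ℝ) ≤ c * lam := by
      apply div_le_self (by positivity)
      exact_mod_cast Nat.one_le_iff_ne_zero.2 (Nat.factorial_ne_zero k)
    have h4 : lam / (k.factorial:ℝ) ≤ lam := by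
      apply div_le_self hlam.le
      exact_mod_cast Nat.one_le_iff_ne_zero.2 (Nat.factorial_ne_zero k)
    nlinarith [hkd, hDe, hDhigh, hlam, hc]
  set P2 := Finset.univ.filter (fun p : Fin (k+1) × Fin (k+1) => p.1 < p.2) with hP2def
  set V : ℤ := ∏ p ∈ P2, (n p.2 - n p.1) with hVdef
  have hVpos : 0 < V := by
    refine Finset.prod_pos (fun p hp => ?_)
    have : p.1 < p.2 := (Finset.mem_filter.1 hp).2
    exact sub_pos.2 (hn this)
  have hV1 : 1 ≤ V := hVpos
  have hu : ∀ i, ∃ u : ℤ, V = (q i) * u := fun i => qprod_dvd k n hn i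
  choose u hu using hu
  have hwV : ∀ i, w i * (V:ℝ) = ((u i : ℤ) : ℝ) := by
    intro i
    rw [hw i, hu i]
    push_cast
    rw [← mul_assoc, inv_mul_cancel₀ (by exact_mod_cast hq0 i), one_mul]
  set A : ℤ := ∑ i, m i * u i with hAdef
  have hAr : (A:ℝ) = Dm * (V:ℝ) := by
    rw [hAdef, hDmdef, Finset.sum_mul]
    push_cast
    refine Finset.sum_congr rfl (fun i _ => ?_)
    rw [mul_assoc, hwV i]
  have hAne : A ≠ 0 := by
    intro h
    have h0 : Dm * (V:ℝ) = 0 := by rw [← hAr, h]; simp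
    have hVne : (V:ℝ) ≠ 0 := by positivity
    rcases mul_eq_zero.1 h0 with h' | h'
    · rw [h'] at hDmlow; simp at hDmlow
    · exact hVne h'
  have hA1 : (1:ℝ) ≤ |(A:ℝ)| := by
    have := Int.one_le_abs hAne
    exact_mod_cast this
  have hAV : |(A:ℝ)| ≤ (2*c*lam) * (V:ℝ) := by
    rw [hAr, abs_mul, abs_of_pos (by positivity : (0:ℝ) < (V:ℝ))]
    exact mul_le_mul_of_nonneg_right hDmhigh (by positivity)
  have hVlow : (2*c*lam)⁻¹ ≤ (V:ℝ) := by
    rw [inv_le_iff_one_le_mul₀ (by positivity)]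
    have : (1:ℝ) ≤ (2*c*lam) * (V:ℝ) := le_trans hA1 hAV
    linarith
  -- V ≤ L ^ K2
  set L : ℤ := n (Fin.last k) - n 0 with hLdef
  have hLfac : ∀ p ∈ P2, n p.2 - n p.1 ≤ L := by
    intro p _
    have h1 : n p.2 ≤ n (Fin.last k) := hn.monotone (Fin.le_last _)
    have h2 : n 0 ≤ n p.1 := hn.monotone (Fin.zero_le _)
    omega
  have hVL : V ≤ L ^ P2.card := by
    rw [hVdef]
    calc ∏ p ∈ P2, (n p.2 - n p.1) ≤ ∏ _p ∈ P2, L :=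
      Finset.prod_le_prod (fun p hp => by
        have : p.1 < p.2 := (Finset.mem_filter.1 hp).2
        exact (sub_pos.2 (hn this)).le) hLfac
    _ = L ^ P2.card := Finset.prod_const L
  have hcard : P2.card = k*(k+1)/2 := by
    have h1 := pairs_card (k+1)
    rw [← hP2def] at h1
    have h2 : (k+1) * ((k+1) - 1) = k*(k+1) := by
      simp [Nat.add_sub_cancel, Nat.mul_comm]
    rw [h2] at h1
    omega
  rw [hcard] at hVL
  calc (2*c*lam)⁻¹ ≤ (V:ℝ) := hVlow
  _ ≤ ((L:ℤ):ℝ) ^ (k*(k+1)/2 : ℕ) := by exact_mod_cast hVL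

theorem stmt_6 (k N : ℕ) (hk : 1 ≤ k) (hN : 4 ≤ N)
    (δ : ℝ) (hδ0 : 0 < δ) (hδ1 : δ < 1/4)
    (f : ℝ → ℝ) (lam c : ℝ) (hlam : 0 < lam) (hc : 1 ≤ c)
    (hf : ContDiffOn ℝ k f (Set.Icc (N:ℝ) (2*N)))
    (hder : ∀ x ∈ Set.Icc (N:ℝ) (2*N),
      lam ≤ |iteratedDerivWithin k f (Set.Icc (N:ℝ) (2*N)) x| ∧
      |iteratedDerivWithin k f (Set.Icc (N:ℝ) (2*N)) x| ≤ c * lam)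
    (hsmall : ((k+1).factorial : ℝ) * δ < lam) :
    (({n : ℤ | (N:ℤ) ≤ n ∧ n ≤ 2*N ∧ |f n - round (f n)| < δ}.ncard : ℝ)) ≤
      (2*(k:ℝ) * (2*c) ^ ((2:ℝ)/((k:ℝ)*((k:ℝ)+1)))) * N * lam ^ ((2:ℝ)/((k:ℝ)*((k:ℝ)+1)))
        + 4*(k:ℝ) := by
  classical
  set p : ℝ := (2:ℝ)/((k:ℝ)*((k:ℝ)+1)) with hpdef
  have hkpos : (0:ℝ) < (k:ℝ) := by exact_mod_cast hk
  have hp0 : 0 < p := by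
    rw [hpdef]; positivity
  have h2cl : (0:ℝ) < 2*c*lam := by positivity
  set L0 : ℝ := (2*c*lam) ^ (-p) with hL0def
  have hL0pos : 0 < L0 := Real.rpow_pos_of_pos h2cl _
  set S : Finset ℤ := (Finset.Icc (N:ℤ) (2*(N:ℤ))).filter
    (fun n => |f n - round (f n)| < δ) with hSdef
  have hset : {n : ℤ | (N:ℤ) ≤ n ∧ n ≤ 2*N ∧ |f n - round (f n)| < δ} = ↑S := by
    ext z
    simp only [hSdef, Finset.coe_filter, Finset.mem_Icc, Set.mem_setOf_eq, and_assoc]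
  rw [hset, Set.ncard_coe_finset]
  have hNR : (4:ℝ) ≤ (N:ℝ) := by exact_mod_cast hN
  have hab : (N:ℝ) < 2*N := by linarith
  -- spacing in ℝ form
  have key : ∀ n : Fin (k+1) → ℤ, StrictMono n → (∀ i, n i ∈ S) →
      L0 ≤ ((n (Fin.last k) - n 0 : ℤ) : ℝ) := by
    intro n hn hnS
    have hmem : ∀ i, ((N:ℝ) ≤ ((n i : ℤ) : ℝ) ∧ ((n i : ℤ) : ℝ) ≤ 2*N) ∧
        |f ((n i : ℤ) : ℝ) - round (f ((n i : ℤ) : ℝ))| < δ := by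
      intro i
      have h1 := (Finset.mem_filter.1 (hnS i))
      have h2 := Finset.mem_Icc.1 h1.1
      refine ⟨⟨?_, ?_⟩, h1.2⟩
      · exact_mod_cast h2.1
      · have : ((n i : ℤ):ℝ) ≤ ((2*(N:ℤ) : ℤ):ℝ) := by exact_mod_cast h2.2
        push_cast at this
        linarith
    have hs := spacing_key k (N:ℝ) (2*N) hab δ lam c hδ0 hlam hc f hf hder hsmall n hn hmem
    set L : ℤ := n (Fin.last k) - n 0 with hLdef
    have hL1 : (1:ℝ) ≤ (L:ℝ) := by
      have : n 0 < n (Fin.last k) := by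
        apply hn
        rw [Fin.lt_iff_val_lt_val]
        simp [Fin.last]
        omega
      have : 1 ≤ L := by omega
      exact_mod_cast this
    have hK2 : ((k*(k+1)/2 : ℕ) : ℝ) * p = 1 := by
      have heven : 2 ∣ k*(k+1) := (Nat.even_mul_succ_self k).two_dvd
      have : ((k*(k+1)/2 : ℕ) : ℝ) = (k:ℝ)*((k:ℝ)+1)/2 := by
        rw [Nat.cast_div heven (by norm_num)]
        push_cast
        ring
      rw [this, hpdef]
      field_simp
    calc L0 = ((2*c*lam)⁻¹) ^ p := by
          rw [hL0def, Real.rpow_neg h2cl.le, ← Real.inv_rpow h2cl.le]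
      _ ≤ ((L:ℝ) ^ (k*(k+1)/2 : ℕ)) ^ p := by
          exact Real.rpow_le_rpow (by positivity) hs hp0.le
      _ = (L:ℝ) ^ (((k*(k+1)/2 : ℕ):ℝ) * p) := by
          rw [← Real.rpow_natCast (L:ℝ), ← Real.rpow_mul (by linarith)]
      _ = (L:ℝ) := by rw [hK2, Real.rpow_one]
  -- counting
  set jmap : ℤ → ℕ := fun z => ⌊((z:ℝ) - N)/L0⌋₊ with hjdef
  set M : ℕ := ⌊(N:ℝ)/L0⌋₊ + 1 with hMdef
  have himg : ∀ z ∈ S, jmap z ∈ Finset.range M := by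
    intro z hz
    have h1 := Finset.mem_Icc.1 (Finset.mem_filter.1 hz).1
    have hz2 : ((z:ℤ):ℝ) - N ≤ (N:ℝ) := by
      have : ((z:ℤ):ℝ) ≤ 2*(N:ℝ) := by exact_mod_cast h1.2
      linarith
    rw [Finset.mem_range, hMdef]
    have : jmap z ≤ ⌊(N:ℝ)/L0⌋₊ := by
      apply Nat.floor_le_floor
      gcongr
    omega
  have hfiber : ∀ jj ∈ Finset.range M, (S.filter (fun z => jmap z = jj)).card ≤ k := by
    intro jj _
    by_contra hcon
    push_neg at hcon
    obtain ⟨F, hFsub, hFcard⟩ := Finset.exists_subset_card_eq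
      (s := S.filter (fun z => jmap z = jj)) (n := k+1) (by omega)
    set e := F.orderIsoOfFin hFcard with hedef
    set nn : Fin (k+1) → ℤ := fun i => (e i : ℤ) with hnndef
    have hnn : StrictMono nn := fun i j hij => by
      have := e.strictMono hij
      exact_mod_cast this
    have hnns : ∀ i, nn i ∈ S := by
      intro i
      have : (e i : ℤ) ∈ F := (e i).2
      exact Finset.mem_of_mem_filter _ (hFsub this)
    have hsp := key nn hnn hnns
    have hfib : ∀ i, jmap (nn i) = jj := by
      intro i
      have : (e i : ℤ) ∈ F := (e i).2
      exact (Finset.mem_filter.1 (hFsub this)).2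
    -- same fiber contradiction
    have h0 := hfib 0
    have hl := hfib (Fin.last k)
    have hx0 : (0:ℝ) ≤ ((nn 0 : ℤ):ℝ) - N := by
      have h1 := Finset.mem_Icc.1 (Finset.mem_filter.1 (hnns 0)).1
      have : (N:ℝ) ≤ ((nn 0:ℤ):ℝ) := by exact_mod_cast h1.1
      linarith
    have hxl : (0:ℝ) ≤ ((nn (Fin.last k) : ℤ):ℝ) - N := by
      have h1 := Finset.mem_Icc.1 (Finset.mem_filter.1 (hnns (Fin.last k))).1
      have : (N:ℝ) ≤ ((nn (Fin.last k):ℤ):ℝ) := by exact_mod_cast h1.1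
      linarith
    have hup : (((nn (Fin.last k):ℤ):ℝ) - N)/L0 < jj + 1 := by
      rw [← hl, hjdef]
      exact Nat.lt_floor_add_one _
    have hlow : (jj:ℝ) ≤ (((nn 0:ℤ):ℝ) - N)/L0 := by
      rw [← h0, hjdef]
      exact Nat.floor_le (by positivity)
    have : ((nn (Fin.last k):ℤ):ℝ) - ((nn 0:ℤ):ℝ) < L0 := by
      have h1 : ((nn (Fin.last k):ℤ):ℝ) - N < ((jj:ℝ)+1)*L0 :=
        (div_lt_iff₀ hL0pos).1 hup
      have h2 : (jj:ℝ)*L0 ≤ ((nn 0:ℤ):ℝ) - N := (le_div_iff₀ hL0pos).1 hlow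
      have hexp : ((jj:ℝ)+1)*L0 = (jj:ℝ)*L0 + L0 := by ring
      linarith
    have hcast : ((nn (Fin.last k) - nn 0 : ℤ):ℝ)
        = ((nn (Fin.last k):ℤ):ℝ) - ((nn 0:ℤ):ℝ) := by push_cast; ring
    rw [hcast] at hsp
    linarith
  have hcount : S.card ≤ k * M := by
    have := Finset.card_le_mul_card_image_of_maps_to himg k hfiber
    simpa [Finset.card_range] using this
  -- final arithmetic
  have hMle : (M:ℝ) ≤ (N:ℝ)/L0 + 1 := by
    rw [hMdef]
    push_cast
    have := Nat.floor_le (a := (N:ℝ)/L0) (by positivity)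
    linarith
  have hinv : L0⁻¹ = (2*c*lam) ^ p := by
    rw [hL0def, ← Real.rpow_neg h2cl.le, neg_neg]
  have hmulp : (2*c*lam) ^ p = (2*c)^p * lam^p := by
    rw [show (2*c*lam : ℝ) = (2*c)*lam by ring, Real.mul_rpow (by positivity) hlam.le]
  have hSR : (S.card : ℝ) ≤ (k:ℝ) * M := by exact_mod_cast hcount
  have hfinal : (k:ℝ) * M ≤ (k:ℝ) * ((N:ℝ) * ((2*c)^p * lam^p) + 1) := by
    apply mul_le_mul_of_nonneg_left _ hkpos.le
    calc (M:ℝ) ≤ (N:ℝ)/L0 + 1 := hMle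
      _ = (N:ℝ) * L0⁻¹ + 1 := by ring
      _ = (N:ℝ) * ((2*c)^p * lam^p) + 1 := by rw [hinv, hmulp]
  have hpos1 : 0 ≤ (k:ℝ) * ((N:ℝ) * ((2*c)^p * lam^p)) := by positivity
  calc (S.card : ℝ) ≤ (k:ℝ) * ((N:ℝ) * ((2*c)^p * lam^p) + 1) := le_trans hSR hfinal
    _ ≤ (2*(k:ℝ) * (2*c)^p) * N * lam^p + 4*(k:ℝ) := by nlinarith [hkpos, hpos1]
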